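/- Let C be symmetric PSD with eigenvalues λ_1 ≥ ... ≥ λ_d, λ > 0, k ∈ {1,...,d}, and P^{-1/2} the exact rank-k sketched preconditioner. Then the ratio of the trace of M := P^{-1/2}(C+λI)P^{-1/2} to its smallest eigenvalue is at most (k·λ_k + Σ_{i>k} λ_i)/λ + d. -/

import Mathlib

open Matrix

/-- The smallest value of the Rayleigh quotient of `M`, i.e. the smallest eigenvalue
for symmetric `M`. -/
noncomputable def lamMin {d : ℕ} (M : Matrix (Fin d) (Fin d) ℝ) : ℝ :=
  ⨅ x : { x : EuclideanSpace ℝ (Fin d) // ‖x‖ = 1 },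
    inner (𝕜 := ℝ) (Matrix.toEuclideanLin M x.1) x.1

section Aux
variable {d : ℕ}

lemma vmv_mul (w v w' v' : Fin d → ℝ) :
    vecMulVec w v * vecMulVec w' v' = (v ⬝ᵥ w') • vecMulVec w v' := by
  ext a b
  simp only [Matrix.mul_apply, vecMulVec_apply, Matrix.smul_apply, dotProduct, smul_eq_mul,
    Finset.sum_mul]
  exact Finset.sum_congr rfl fun x _ => by ring

lemma vmv_trace (w v : Fin d → ℝ) : (vecMulVec w v).trace = w ⬝ᵥ v := by
  simp [Matrix.trace, Matrix.diag, vecMulVec_apply, dotProduct]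

lemma vmv_mulVec (w v y : Fin d → ℝ) :
    (vecMulVec w v) *ᵥ y = (v ⬝ᵥ y) • w := by
  ext a
  simp only [Matrix.mulVec, vecMulVec_apply, dotProduct, Pi.smul_apply, smul_eq_mul,
    Finset.sum_mul]
  apply Finset.sum_congr rfl
  intro x _
  ring

lemma vmv_sum_one (u : Fin d → Fin d → ℝ)
    (hu : ∀ i j, u i ⬝ᵥ u j = if i = j then (1 : ℝ) else 0) :
    ∑ i, vecMulVec (u i) (u i) = (1 : Matrix (Fin d) (Fin d) ℝ) := by
  have hUUT : (Matrix.of u) * (Matrix.of u)ᵀ = 1 := by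
    ext i j
    simpa [Matrix.mul_apply, dotProduct, Matrix.one_apply] using hu i j
  have hUTU : (Matrix.of u)ᵀ * (Matrix.of u) = 1 := mul_eq_one_comm.mp hUUT
  rw [← hUTU]
  ext a b
  simp only [Matrix.sum_apply, vecMulVec_apply, Matrix.mul_apply, Matrix.transpose_apply,
    Matrix.of_apply]

lemma sum_mulVec' {ι : Type*} (t : Finset ι) (A : ι → Matrix (Fin d) (Fin d) ℝ)
    (y : Fin d → ℝ) : (∑ i ∈ t, A i) *ᵥ y = ∑ i ∈ t, A i *ᵥ y := by
  ext a
  simp only [Matrix.mulVec, dotProduct, Matrix.sum_apply, Finset.sum_apply, Finset.sum_mul]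
  rw [Finset.sum_comm]

lemma sum_dot' {ι : Type*} (t : Finset ι) (v : ι → Fin d → ℝ) (y : Fin d → ℝ) :
    (∑ i ∈ t, v i) ⬝ᵥ y = ∑ i ∈ t, v i ⬝ᵥ y := by
  simp only [dotProduct, Finset.sum_apply, Finset.sum_mul]
  rw [Finset.sum_comm]

end Aux

theorem exact_sketched_preconditioner_condition_number {d : ℕ}
    (u : Fin d → Fin d → ℝ)
    (hu : ∀ i j, u i ⬝ᵥ u j = if i = j then (1 : ℝ) else 0)
    (μ : Fin d → ℝ) (hμ0 : ∀ i, 0 ≤ μ i) (hμ : ∀ i j : Fin d, i ≤ j → μ j ≤ μ i)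
    (l : ℝ) (hl : 0 < l) (k : Fin d)
    (C : Matrix (Fin d) (Fin d) ℝ)
    (hC : C = ∑ i, μ i • vecMulVec (u i) (u i))
    (Ph : Matrix (Fin d) (Fin d) ℝ)
    (hPh : Ph = ∑ i ∈ Finset.Iic k, (Real.sqrt (μ i + l))⁻¹ • vecMulVec (u i) (u i)
        + (Real.sqrt (μ k + l))⁻¹ •
          ((1 : Matrix (Fin d) (Fin d) ℝ) - ∑ i ∈ Finset.Iic k, vecMulVec (u i) (u i))) :
    (Ph * (C + l • (1 : Matrix (Fin d) (Fin d) ℝ)) * Ph).trace /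
        lamMin (Ph * (C + l • (1 : Matrix (Fin d) (Fin d) ℝ)) * Ph)
      ≤ (((Finset.Iic k).card : ℝ) * μ k + ∑ i ∈ Finset.Ioi k, μ i) / l + d := by
  -- basic positivity
  have hpos : ∀ i, 0 < μ i + l := fun i => by linarith [hμ0 i]
  have hkpos : 0 < μ k + l := hpos k
  set E : Fin d → Matrix (Fin d) (Fin d) ℝ := fun i => vecMulVec (u i) (u i) with hE
  have hsum : ∑ i, E i = 1 := vmv_sum_one u hu
  have hEmul : ∀ i j, E i * E j = if i = j then E i else 0 := by
    intro i j
    rw [hE]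
    simp only
    rw [vmv_mul, hu i j]
    split <;> simp_all
  -- s : coefficients of Ph
  set s : Fin d → ℝ := fun i => if i ≤ k then (Real.sqrt (μ i + l))⁻¹
      else (Real.sqrt (μ k + l))⁻¹ with hs
  have hPh' : Ph = ∑ i, s i • E i := by
    rw [hPh, ← Finset.sum_add_sum_compl (Finset.Iic k) (fun i => s i • E i)]
    congr 1
    · apply Finset.sum_congr rfl
      intro i hi
      rw [hs]; simp only
      rw [if_pos (Finset.mem_Iic.mp hi)]
    · rw [← hsum, ← Finset.sum_add_sum_compl (Finset.Iic k) E, add_sub_cancel_left,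
        Finset.smul_sum]
      apply Finset.sum_congr rfl
      intro i hi
      rw [hs]; simp only
      rw [if_neg (by simpa using Finset.mem_compl.mp hi)]
  -- C + l I as a sum
  have hCl : C + l • (1 : Matrix (Fin d) (Fin d) ℝ) = ∑ i, (μ i + l) • E i := by
    rw [hC, ← hsum, Finset.smul_sum, ← Finset.sum_add_distrib]
    apply Finset.sum_congr rfl
    intro i _
    rw [add_smul]
  -- product of two such sums
  have hmul : ∀ a b : Fin d → ℝ,
      (∑ i, a i • E i) * (∑ j, b j • E j) = ∑ i, (a i * b i) • E i := by
    intro a b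
    rw [Finset.sum_mul_sum]
    apply Finset.sum_congr rfl
    intro i _
    calc ∑ j, a i • E i * b j • E j
        = ∑ j, if i = j then (a i * b i) • E i else 0 := by
          apply Finset.sum_congr rfl
          intro j _
          rw [Matrix.smul_mul, Matrix.mul_smul, hEmul i j]
          split_ifs with h
          · subst h; rw [smul_smul]
          · simp
      _ = (a i * b i) • E i := by simp
  set m : Fin d → ℝ := fun i => s i * (μ i + l) * s i with hm
  have hM : Ph * (C + l • (1 : Matrix (Fin d) (Fin d) ℝ)) * Ph = ∑ i, m i • E i := by
    rw [hPh', hCl, hmul, hmul]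
  have hsqrt_ne : ∀ i, Real.sqrt (μ i + l) ≠ 0 := fun i =>
    ne_of_gt (Real.sqrt_pos.mpr (hpos i))
  have hm1 : ∀ i, i ≤ k → m i = 1 := by
    intro i hik
    rw [hm]; simp only [hs, if_pos hik]
    rw [← Real.mul_self_sqrt (hpos i).le]
    field_simp
    rw [Real.sqrt_sq (Real.sqrt_nonneg _)]
    exact div_self (pow_ne_zero 2 (hsqrt_ne i))
  have hm2 : ∀ i, ¬ i ≤ k → m i = (μ i + l) / (μ k + l) := by
    intro i hik
    rw [hm]; simp only [hs, if_neg hik]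
    rw [eq_div_iff (ne_of_gt hkpos)]
    nth_rewrite 3 [← Real.mul_self_sqrt hkpos.le]
    field_simp
  set c : ℝ := l / (μ k + l) with hc
  have hcpos : 0 < c := div_pos hl hkpos
  have hmlb : ∀ i, c ≤ m i := by
    intro i
    by_cases hik : i ≤ k
    · rw [hm1 i hik, hc]
      rw [div_le_one hkpos]
      linarith [hμ0 k]
    · rw [hm2 i hik, hc]
      gcongr
      linarith [hμ0 i]
  have hm0 : ∀ i, 0 ≤ m i := fun i => le_trans hcpos.le (hmlb i)
  -- trace
  have htr : (Ph * (C + l • (1 : Matrix (Fin d) (Fin d) ℝ)) * Ph).trace = ∑ i, m i := by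
    rw [hM, Matrix.trace_sum]
    apply Finset.sum_congr rfl
    intro i _
    rw [Matrix.trace_smul, hE]
    simp [vmv_trace, hu i i]
  -- Rayleigh quotient lower bound
  have hray : ∀ x : {x : EuclideanSpace ℝ (Fin d) // ‖x‖ = 1},
      c ≤ inner (𝕜 := ℝ)
        (Matrix.toEuclideanLin (Ph * (C + l • (1 : Matrix (Fin d) (Fin d) ℝ)) * Ph) x.1) x.1 := by
    rintro ⟨x, hx⟩
    set y : Fin d → ℝ := (WithLp.equiv 2 (Fin d → ℝ)) x with hy
    have hinner : ∀ v : Fin d → ℝ,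
        inner (𝕜 := ℝ) ((WithLp.equiv 2 (Fin d → ℝ)).symm v) x = v ⬝ᵥ y := by
      intro v
      rw [PiLp.inner_apply]
      simp [dotProduct, hy, RCLike.inner_apply]
      exact Finset.sum_congr rfl fun _ _ => mul_comm _ _
    have hyy : y ⬝ᵥ y = 1 := by
      have h1 : inner (𝕜 := ℝ) x x = (1 : ℝ) := by
        rw [real_inner_self_eq_norm_sq, hx]; norm_num
      rw [← h1, PiLp.inner_apply]
      simp [dotProduct, hy, RCLike.inner_apply]
      exact Finset.sum_congr rfl fun _ _ => (sq _).symm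
    have hmv : ∀ A : Matrix (Fin d) (Fin d) ℝ,
        inner (𝕜 := ℝ) (Matrix.toEuclideanLin A x) x = (A *ᵥ y) ⬝ᵥ y := by
      intro A
      rw [Matrix.toEuclideanLin_apply]; exact hinner _
    rw [hmv, hM]
    have hexp : ((∑ i, m i • E i) *ᵥ y) ⬝ᵥ y = ∑ i, m i * ((u i ⬝ᵥ y) * (u i ⬝ᵥ y)) := by
      rw [sum_mulVec', sum_dot']
      apply Finset.sum_congr rfl
      intro i _
      rw [Matrix.smul_mulVec, hE]
      simp only [vmv_mulVec, smul_smul]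
      rw [smul_dotProduct]
      simp [mul_assoc]
    have hparseval : ∑ i, (u i ⬝ᵥ y) * (u i ⬝ᵥ y) = 1 := by
      have h1 : ((∑ i, E i) *ᵥ y) ⬝ᵥ y = 1 := by rw [hsum, Matrix.one_mulVec, hyy]
      rw [← h1, sum_mulVec', sum_dot']
      apply Finset.sum_congr rfl
      intro i _
      rw [hE]
      simp only [vmv_mulVec, smul_dotProduct, smul_eq_mul]
    rw [hexp]
    calc c = ∑ i, c * ((u i ⬝ᵥ y) * (u i ⬝ᵥ y)) := by
            rw [← Finset.mul_sum, hparseval, mul_one]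
      _ ≤ ∑ i, m i * ((u i ⬝ᵥ y) * (u i ⬝ᵥ y)) := by
            apply Finset.sum_le_sum
            intro i _
            exact mul_le_mul_of_nonneg_right (hmlb i) (mul_self_nonneg _)
  have hne : Nonempty {x : EuclideanSpace ℝ (Fin d) // ‖x‖ = 1} :=
    ⟨⟨EuclideanSpace.single k 1, by simp [EuclideanSpace.norm_single]⟩⟩
  have hlam : c ≤ lamMin (Ph * (C + l • (1 : Matrix (Fin d) (Fin d) ℝ)) * Ph) :=
    le_ciInf hray
  have hcompl : (Finset.Iic k)ᶜ = Finset.Ioi k := by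
    ext i; simp [not_le]
  have hd : ((Finset.Iic k).card : ℝ) + ((Finset.Ioi k).card : ℝ) = d := by
    have h2 := Finset.card_add_card_compl (Finset.Iic k)
    rw [hcompl, Fintype.card_fin] at h2
    exact_mod_cast congrArg (Nat.cast : ℕ → ℝ) h2
  have hsplit : ∑ i, m i = ((Finset.Iic k).card : ℝ)
      + (∑ i ∈ Finset.Ioi k, (μ i + l)) / (μ k + l) := by
    rw [← Finset.sum_add_sum_compl (Finset.Iic k) m, hcompl]
    congr 1
    · rw [Finset.sum_congr rfl (fun i hi => hm1 i (Finset.mem_Iic.mp hi)), Finset.sum_const,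
        nsmul_eq_mul, mul_one]
    · rw [Finset.sum_div]
      apply Finset.sum_congr rfl
      intro i hi
      exact hm2 i (not_le.mpr (Finset.mem_Ioi.mp hi))
  have htrnn : 0 ≤ ∑ i, m i := Finset.sum_nonneg fun i _ => hm0 i
  have hlampos : 0 < lamMin (Ph * (C + l • (1 : Matrix (Fin d) (Fin d) ℝ)) * Ph) :=
    lt_of_lt_of_le hcpos hlam
  have hstep : (Ph * (C + l • (1 : Matrix (Fin d) (Fin d) ℝ)) * Ph).trace /
        lamMin (Ph * (C + l • (1 : Matrix (Fin d) (Fin d) ℝ)) * Ph)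
      ≤ (∑ i, m i) / c := by
    rw [htr]
    gcongr
  have hfinal : (∑ i, m i) / c
      = (((Finset.Iic k).card : ℝ) * μ k + ∑ i ∈ Finset.Ioi k, μ i) / l + d := by
    rw [hsplit, hc]
    have hA : ∑ i ∈ Finset.Ioi k, (μ i + l)
        = (∑ i ∈ Finset.Ioi k, μ i) + ((Finset.Ioi k).card : ℝ) * l := by
      rw [Finset.sum_add_distrib, Finset.sum_const, nsmul_eq_mul]
    rw [hA]
    generalize ((Finset.Iic k).card : ℝ) = n1 at hd ⊢
    generalize ((Finset.Ioi k).card : ℝ) = n2 at hd ⊢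
    generalize (∑ i ∈ Finset.Ioi k, μ i) = A
    field_simp
    linear_combination l * hd
  rw [hfinal] at hstep
  exact hstep
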